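/- Let γ > 1, d ≥ 1, and s⁰ ∈ ℝ, and let p(ρ, m, E) = (γ−1)(E − |m|²/(2ρ)). Let U_x = (ρ_x, m_x, E_x), x ∈ D, be a finite nonempty family of states with ρ_x > 0 for all x, and let Ū = (ρ̄, m̄, Ē) be a state with ρ̄ > 0 and p(Ū) > exp(s⁰) ρ̄^γ. Define a_x = p(U_x) − exp(s⁰) ρ_x^γ, ā = p(Ū) − exp(s⁰) ρ̄^γ, τ = min{0, min_{x∈D} a_x}, and ε = τ/(τ − ā). Then ε ∈ [0,1), and for every x ∈ D the limited state ᴸU_x = (1−ε)U_x + εŪ has positive density ρ(ᴸU_x) > 0 and satisfies the entropy constraint p(ᴸU_x) ≥ exp(s⁰) ρ(ᴸU_x)^γ; equivalently, the physical entropy s(ᴸU_x) = ln p(ᴸU_x) − γ ln ρ(ᴸU_x) satisfies s(ᴸU_x) ≥ s⁰. -/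

import Mathlib

/-- The ideal-gas pressure `p(ρ, m, E) = (γ − 1)(E − |m|²/(2ρ))` of a
conservative Euler state `(ρ, m, E) ∈ ℝ × ℝ^d × ℝ`. -/
noncomputable def eulerPressure (γ : ℝ) {d : ℕ}
    (ρ : ℝ) (m : EuclideanSpace ℝ (Fin d)) (E : ℝ) : ℝ :=
  (γ - 1) * (E - ‖m‖ ^ 2 / (2 * ρ))

lemma quad_div_convex {d : ℕ} (a b : ℝ) (ha : 0 < a) (hb : 0 < b)
    (u v : EuclideanSpace ℝ (Fin d)) :
    ‖u + v‖ ^ 2 / (a + b) ≤ ‖u‖ ^ 2 / a + ‖v‖ ^ 2 / b := by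
  have hsq : ‖u + v‖ ^ 2 = ‖u‖ ^ 2 + 2 * inner ℝ u v + ‖v‖ ^ 2 :=
    norm_add_sq_real u v
  have hcs : inner ℝ u v ≤ ‖u‖ * ‖v‖ := real_inner_le_norm u v
  rw [div_add_div _ _ ha.ne' hb.ne', div_le_div_iff₀ (by linarith) (by positivity)]
  nlinarith [sq_nonneg (b * ‖u‖ - a * ‖v‖), norm_nonneg u, norm_nonneg v,
    mul_pos ha hb, mul_nonneg (mul_pos ha hb).le (mul_nonneg (norm_nonneg u) (norm_nonneg v))]

/-- the entropy-bounding limiter works: given point states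
`U_x = (ρ_x, m_x, E_x)` with positive densities and an average state `Ū` with
`ρ̄ > 0` and `p(Ū) > exp(s⁰) ρ̄^γ`, the linear-scaling coefficient
`ε = τ/(τ − ā)` with `τ = min{0, min_x (p(U_x) − exp(s⁰)ρ_x^γ)}` and
`ā = p(Ū) − exp(s⁰)ρ̄^γ` lies in `[0,1)`, and every limited state
`ᴸU_x = (1−ε)U_x + εŪ` has positive density and satisfies
`p(ᴸU_x) ≥ exp(s⁰) ρ(ᴸU_x)^γ`, equivalently `s(ᴸU_x) ≥ s⁰`. -/
theorem entropy_bounding_limiter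
    (γ : ℝ) (hγ : 1 < γ) (d : ℕ) (hd : 1 ≤ d) (s0 : ℝ)
    {D : Type*} [Fintype D] [Nonempty D]
    (ρ : D → ℝ) (m : D → EuclideanSpace ℝ (Fin d)) (E : D → ℝ)
    (hρ : ∀ x, 0 < ρ x)
    (ρb : ℝ) (mb : EuclideanSpace ℝ (Fin d)) (Eb : ℝ)
    (hρb : 0 < ρb)
    (hpb : eulerPressure γ ρb mb Eb > Real.exp s0 * ρb ^ γ)
    (a : D → ℝ)
    (ha : ∀ x, a x = eulerPressure γ (ρ x) (m x) (E x) - Real.exp s0 * ρ x ^ γ)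
    (abar : ℝ) (habar : abar = eulerPressure γ ρb mb Eb - Real.exp s0 * ρb ^ γ)
    (τ ε : ℝ)
    (hτ : τ = min 0 (Finset.univ.inf' Finset.univ_nonempty a))
    (hε : ε = τ / (τ - abar)) :
    0 ≤ ε ∧ ε < 1 ∧
    ∀ x : D,
      0 < (1 - ε) * ρ x + ε * ρb ∧
      eulerPressure γ ((1 - ε) * ρ x + ε * ρb) ((1 - ε) • m x + ε • mb)
          ((1 - ε) * E x + ε * Eb) ≥
        Real.exp s0 * ((1 - ε) * ρ x + ε * ρb) ^ γ ∧
      Real.log (eulerPressure γ ((1 - ε) * ρ x + ε * ρb)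
            ((1 - ε) • m x + ε • mb) ((1 - ε) * E x + ε * Eb)) -
          γ * Real.log ((1 - ε) * ρ x + ε * ρb) ≥ s0 := by
  have habar_pos : 0 < abar := by rw [habar]; linarith
  have hτ0 : τ ≤ 0 := hτ ▸ min_le_left _ _
  have hτle : ∀ x, τ ≤ a x := fun x =>
    hτ ▸ le_trans (min_le_right _ _) (Finset.inf'_le _ (Finset.mem_univ x))
  have hden : τ - abar < 0 := by linarith
  have hε0 : 0 ≤ ε := hε ▸ div_nonneg_iff.mpr (Or.inr ⟨hτ0, hden.le⟩)
  have hε1 : ε < 1 := by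
    rw [hε, div_lt_one_of_neg hden]; linarith
  have hεmul : ε * (τ - abar) = τ := by rw [hε, div_mul_cancel₀ _ hden.ne]
  have hcomb : (1 - ε) * τ + ε * abar = 0 := by nlinarith
  refine ⟨hε0, hε1, fun x => ?_⟩
  have h1ε : 0 < 1 - ε := by linarith
  have hρx := hρ x
  set ρh : ℝ := (1 - ε) * ρ x + ε * ρb with hρh
  have hρhpos : 0 < ρh :=
    add_pos_of_pos_of_nonneg (mul_pos h1ε hρx) (mul_nonneg hε0 hρb.le)
  -- convexity of rpow
  have hrpow : ρh ^ γ ≤ (1 - ε) * ρ x ^ γ + ε * ρb ^ γ := by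
    have := (convexOn_rpow hγ.le).2 (Set.mem_Ici.mpr hρx.le)
      (Set.mem_Ici.mpr hρb.le) h1ε.le hε0 (by ring)
    simpa [smul_eq_mul] using this
  -- concavity of pressure
  have hpress : eulerPressure γ ρh ((1 - ε) • m x + ε • mb) ((1 - ε) * E x + ε * Eb) ≥
      (1 - ε) * eulerPressure γ (ρ x) (m x) (E x) + ε * eulerPressure γ ρb mb Eb := by
    have hkin : ‖(1 - ε) • m x + ε • mb‖ ^ 2 / (2 * ρh) ≤
        (1 - ε) * (‖m x‖ ^ 2 / (2 * ρ x)) + ε * (‖mb‖ ^ 2 / (2 * ρb)) := by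
      rcases eq_or_lt_of_le hε0 with h0 | hεpos
      · have hρhe : ρh = ρ x := by rw [hρh, ← h0]; ring
        rw [hρhe, ← h0]
        simp
      · have key := quad_div_convex ((1 - ε) * ρ x) (ε * ρb)
          (mul_pos h1ε hρx) (mul_pos hεpos hρb) ((1 - ε) • m x) (ε • mb)
        rw [norm_smul, norm_smul] at key
        simp only [Real.norm_eq_abs, abs_of_pos h1ε, abs_of_pos hεpos,
          mul_pow] at key
        have e1 : (1 - ε) ^ 2 * ‖m x‖ ^ 2 / ((1 - ε) * ρ x)
            = (1 - ε) * (‖m x‖ ^ 2 / ρ x) := by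
          field_simp
        have e2 : ε ^ 2 * ‖mb‖ ^ 2 / (ε * ρb) = ε * (‖mb‖ ^ 2 / ρb) := by
          field_simp
        rw [e1, e2] at key
        have e3 : 2 * ρh = 2 * ((1 - ε) * ρ x + ε * ρb) := by rw [hρh]
        rw [e3, mul_comm (2:ℝ) _, ← div_div]
        calc ‖(1 - ε) • m x + ε • mb‖ ^ 2 / ((1 - ε) * ρ x + ε * ρb) / 2
            ≤ ((1 - ε) * (‖m x‖ ^ 2 / ρ x) + ε * (‖mb‖ ^ 2 / ρb)) / 2 := by
              apply div_le_div_of_nonneg_right ?_ (by norm_num)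
              exact key
          _ = (1 - ε) * (‖m x‖ ^ 2 / (2 * ρ x)) + ε * (‖mb‖ ^ 2 / (2 * ρb)) := by
              field_simp
    unfold eulerPressure
    have hγ1 : 0 < γ - 1 := by linarith
    nlinarith [hkin]
  have hax : τ ≤ a x := hτle x
  have hmain : eulerPressure γ ρh ((1 - ε) • m x + ε • mb) ((1 - ε) * E x + ε * Eb) ≥
      Real.exp s0 * ρh ^ γ := by
    have hax' := ha x
    have : (1 - ε) * eulerPressure γ (ρ x) (m x) (E x) + ε * eulerPressure γ ρb mb Eb
        = (1 - ε) * a x + ε * abar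
          + ((1 - ε) * (Real.exp s0 * ρ x ^ γ) + ε * (Real.exp s0 * ρb ^ γ)) := by
      rw [hax', habar]; ring
    have h2 : (1 - ε) * a x + ε * abar ≥ 0 := by nlinarith
    have h3 : Real.exp s0 * ρh ^ γ ≤
        (1 - ε) * (Real.exp s0 * ρ x ^ γ) + ε * (Real.exp s0 * ρb ^ γ) := by
      have := mul_le_mul_of_nonneg_left hrpow (Real.exp_pos s0).le
      nlinarith [this]
    linarith [hpress, this ▸ hpress]
  refine ⟨hρhpos, hmain, ?_⟩
  have hrpos : 0 < Real.exp s0 * ρh ^ γ :=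
    mul_pos (Real.exp_pos s0) (Real.rpow_pos_of_pos hρhpos γ)
  have hppos : 0 < eulerPressure γ ρh ((1 - ε) • m x + ε • mb) ((1 - ε) * E x + ε * Eb) :=
    lt_of_lt_of_le hrpos hmain
  have hlog := Real.log_le_log hrpos hmain
  rw [Real.log_mul (Real.exp_pos s0).ne' (Real.rpow_pos_of_pos hρhpos γ).ne',
    Real.log_exp, Real.log_rpow hρhpos] at hlog
  linarith
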